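/- Suppose the squared singular values of A satisfy σ_i² = C·α^{i-1} for i ≥ 1 with α ∈ (0,1) and C > 0, and let γ(k) be the unique positive solution of Σ_{i≥1} γσ_i²/(γσ_i²+1) = k. Then γ(k) is strictly increasing in k, and the associated error expression k/γ(k) is strictly decreasing in k. -/

import Mathlib

/-- Under exponential spectral decay `σ_i² = C·αⁱ`, the solution `γ(k)` of
`∑_{i} γσ_i²/(γσ_i²+1) = k` is strictly increasing in `k`, and the error expression
`k/γ(k)` is strictly decreasing in `k`. -/
theorem stmt13 (C α : ℝ) (hC : 0 < C) (hα : α ∈ Set.Ioo (0 : ℝ) 1)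
    (γ : ℝ → ℝ) (hγpos : ∀ k : ℝ, 0 < k → 0 < γ k)
    (hγ : ∀ k : ℝ, 0 < k →
      ∑' i : ℕ, γ k * (C * α ^ i) / (γ k * (C * α ^ i) + 1) = k) :
    ∀ k₁ k₂ : ℝ, 0 < k₁ → k₁ < k₂ → γ k₁ < γ k₂ ∧ k₂ / γ k₂ < k₁ / γ k₁ := by
  obtain ⟨hα0, hα1⟩ := hα
  intro k₁ k₂ hk₁ hlt
  have hk₂ : 0 < k₂ := hk₁.trans hlt
  have hc : ∀ i : ℕ, 0 < C * α ^ i := fun i => mul_pos hC (pow_pos hα0 i)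
  have hsum : ∀ k, 0 < k →
      Summable (fun i : ℕ => γ k * (C * α ^ i) / (γ k * (C * α ^ i) + 1)) := by
    intro k hk
    by_contra h
    have h0 := hγ k hk
    rw [tsum_eq_zero_of_not_summable h] at h0
    linarith
  have hγ1 := hγpos k₁ hk₁
  have hγ2 := hγpos k₂ hk₂
  have hmono : γ k₁ < γ k₂ := by
    by_contra h
    push_neg at h
    have hle : ∀ i : ℕ, γ k₂ * (C * α ^ i) / (γ k₂ * (C * α ^ i) + 1)
        ≤ γ k₁ * (C * α ^ i) / (γ k₁ * (C * α ^ i) + 1) := by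
      intro i
      have hci := hc i
      have d1 : 0 < γ k₁ * (C * α ^ i) + 1 := by positivity
      have d2 : 0 < γ k₂ * (C * α ^ i) + 1 := by positivity
      rw [div_le_div_iff₀ d2 d1]
      nlinarith [mul_le_mul_of_nonneg_right h hci.le]
    have hts := Summable.tsum_le_tsum hle (hsum k₂ hk₂) (hsum k₁ hk₁)
    rw [hγ k₁ hk₁, hγ k₂ hk₂] at hts
    linarith
  refine ⟨hmono, ?_⟩
  have key : ∀ k, 0 < k → k / γ k = ∑' i : ℕ, (C * α ^ i) / (γ k * (C * α ^ i) + 1) := by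
    intro k hk
    have hγk := hγpos k hk
    have h1 : (∑' i : ℕ, γ k * (C * α ^ i) / (γ k * (C * α ^ i) + 1)) / γ k
        = ∑' i : ℕ, (C * α ^ i) / (γ k * (C * α ^ i) + 1) := by
      rw [← tsum_div_const]
      congr 1
      funext i
      have hci := hc i
      have d : (γ k * (C * α ^ i) + 1) ≠ 0 := by positivity
      field_simp
    rw [← h1, hγ k hk]
  rw [key k₁ hk₁, key k₂ hk₂]
  have hsum' : ∀ k, 0 < k →
      Summable (fun i : ℕ => (C * α ^ i) / (γ k * (C * α ^ i) + 1)) := by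
    intro k hk
    have hγk := hγpos k hk
    have := (hsum k hk).div_const (γ k)
    refine this.congr (fun i => ?_)
    have hci := hc i
    have d : (γ k * (C * α ^ i) + 1) ≠ 0 := by positivity
    field_simp
  refine Summable.tsum_lt_tsum_of_nonneg (i := 0) ?_ ?_ ?_ (hsum' k₁ hk₁)
  · intro i
    have hci := hc i
    positivity
  · intro i
    have hci := hc i
    have d1 : 0 < γ k₁ * (C * α ^ i) + 1 := by positivity
    have d2 : 0 < γ k₂ * (C * α ^ i) + 1 := by positivity
    apply div_le_div_of_nonneg_left hci.le d1
    nlinarith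
  · have hci := hc 0
    have d1 : 0 < γ k₁ * (C * α ^ 0) + 1 := by positivity
    have d2 : 0 < γ k₂ * (C * α ^ 0) + 1 := by positivity
    apply div_lt_div_of_pos_left hci d1
    nlinarith
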